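/- Let A be symmetric positive definite. For every F ∈ R^{n×n}, the orthogonal projection of F onto the subspace {S A^{-1} : S symmetric} equals B A^{-1}, where B is the unique symmetric matrix such that F A^{-1} − B A^{-2} is skew-symmetric. -/

import Mathlib

open Matrix

/-- The Frobenius inner product `F : G = tr(Fᵀ G)` on `ℝ^{n×n}`. -/
noncomputable def frob {n : ℕ} (F G : Matrix (Fin n) (Fin n) ℝ) : ℝ :=
  Matrix.trace (Fᵀ * G)

section aux

variable {n : ℕ}

private lemma trace_tmul_self_nonneg (C : Matrix (Fin n) (Fin n) ℝ) :
    0 ≤ Matrix.trace (Cᵀ * C) := by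
  rw [Matrix.trace]
  apply Finset.sum_nonneg
  intro i _
  simp only [Matrix.diag, Matrix.mul_apply, Matrix.transpose_apply]
  exact Finset.sum_nonneg fun j _ => mul_self_nonneg _

private lemma lyap_inj {M B : Matrix (Fin n) (Fin n) ℝ} (hM : M.PosDef)
    (h : B * M + M * B = 0) : B = 0 := by
  obtain ⟨R, hRs, hRR⟩ : ∃ R : Matrix (Fin n) (Fin n) ℝ, Rᵀ = R ∧ R * R = M := by
    open scoped MatrixOrder in
    obtain ⟨X, hX, -, hXX⟩ := CFC.exists_sqrt_of_isSelfAdjoint_of_quasispectrumRestricts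
      hM.posSemidef.nonneg.isSelfAdjoint (QuasispectrumRestricts.nnreal_of_nonneg hM.posSemidef.nonneg)
    exact ⟨X, by simpa [Matrix.star_eq_conjTranspose] using hX.star_eq, hXX⟩
  have hsum : Matrix.trace (Bᵀ * (B * M)) + Matrix.trace (Bᵀ * (M * B)) = 0 := by
    rw [← Matrix.trace_add, ← Matrix.mul_add, h, Matrix.mul_zero, Matrix.trace_zero]
  have t1 : 0 ≤ Matrix.trace (Bᵀ * (B * M)) := by
    have h1 : (B * R)ᵀ * (B * R) = R * (Bᵀ * (B * R)) := by
      rw [Matrix.transpose_mul, hRs, Matrix.mul_assoc]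
    have h2 : Matrix.trace ((B * R)ᵀ * (B * R)) = Matrix.trace (Bᵀ * (B * M)) := by
      rw [h1, Matrix.trace_mul_comm]
      rw [Matrix.mul_assoc, Matrix.mul_assoc, hRR]
    rw [← h2]; exact trace_tmul_self_nonneg _
  have t2 : 0 ≤ Matrix.trace (Bᵀ * (M * B)) := by
    have h1 : (R * B)ᵀ * (R * B) = Bᵀ * (M * B) := by
      rw [Matrix.transpose_mul, hRs, Matrix.mul_assoc, ← Matrix.mul_assoc R, hRR]
    rw [← h1]; exact trace_tmul_self_nonneg _
  have t2z : Matrix.trace (Bᵀ * (M * B)) = 0 := by linarith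
  have hdiag : ∀ j, (Bᵀ * (M * B)).diag j
      = dotProduct (fun i => B i j) (M *ᵥ fun i => B i j) := by
    intro j
    simp [Matrix.diag, Matrix.mul_apply, Matrix.mulVec, dotProduct,
      Matrix.transpose_apply, Finset.mul_sum]
  have hterm : ∀ j, 0 ≤ dotProduct (fun i => B i j) (M *ᵥ fun i => B i j) := by
    intro j
    simpa using hM.posSemidef.dotProduct_mulVec_nonneg (fun i => B i j)
  have hzero : ∀ j ∈ Finset.univ, dotProduct (fun i => B i j) (M *ᵥ fun i => B i j) = 0 := by
    rw [← Finset.sum_eq_zero_iff_of_nonneg (fun j _ => hterm j)]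
    rw [show (∑ j, dotProduct (fun i => B i j) (M *ᵥ fun i => B i j))
        = Matrix.trace (Bᵀ * (M * B)) from ?_]
    · exact t2z
    · rw [Matrix.trace]
      exact Finset.sum_congr rfl fun j _ => (hdiag j).symm
  have hcol : ∀ j, (fun i => B i j) = (0 : Fin n → ℝ) := by
    intro j
    by_contra hne
    have := hM.dotProduct_mulVec_pos hne
    simp only [star_trivial] at this
    exact absurd (hzero j (Finset.mem_univ j)) (ne_of_gt this)
  ext i j
  exact congrFun (hcol j) i

end aux

/-- for `A` symmetric positive definite and any `F`, there is a unique
symmetric `B` such that `F A⁻¹ - B A⁻²` is skew-symmetric, and then `B A⁻¹` is the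
Frobenius-orthogonal projection of `F` onto the subspace `{S A⁻¹ : S symmetric}`, i.e.
`B A⁻¹` lies in this subspace and `F - B A⁻¹` is orthogonal to it. -/
theorem projection_onto_sym_Ainv
    (n : ℕ) (A : Matrix (Fin n) (Fin n) ℝ) (hA_symm : A.IsSymm) (hA_pos : A.PosDef)
    (F : Matrix (Fin n) (Fin n) ℝ) :
    (∃! B : Matrix (Fin n) (Fin n) ℝ, B.IsSymm ∧
      (F * A⁻¹ - B * (A⁻¹ * A⁻¹))ᵀ = -(F * A⁻¹ - B * (A⁻¹ * A⁻¹))) ∧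
    (∀ B : Matrix (Fin n) (Fin n) ℝ, B.IsSymm →
      (F * A⁻¹ - B * (A⁻¹ * A⁻¹))ᵀ = -(F * A⁻¹ - B * (A⁻¹ * A⁻¹)) →
      ∀ S : Matrix (Fin n) (Fin n) ℝ, S.IsSymm → frob (F - B * A⁻¹) (S * A⁻¹) = 0) := by
  have hdet : IsUnit A.det := hA_pos.det_pos.ne'.isUnit
  have hAiT : (A⁻¹)ᵀ = A⁻¹ := by
    rw [Matrix.transpose_nonsing_inv, hA_symm.eq]
  set M : Matrix (Fin n) (Fin n) ℝ := A⁻¹ * A⁻¹ with hMdef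
  have hMT : Mᵀ = M := by rw [hMdef, Matrix.transpose_mul, hAiT]
  -- M is positive definite
  have hMpd : M.PosDef := by
    refine Matrix.PosDef.of_dotProduct_mulVec_pos ?_ ?_
    · show Mᴴ = M
      have hH := hA_pos.inv.1.eq
      rw [hMdef, Matrix.conjTranspose_mul, hH]
    · intro x hx
      have hx' : A⁻¹ *ᵥ x ≠ 0 := by
        intro h0
        apply hx
        have := congrArg (fun v => A *ᵥ v) h0
        simpa [Matrix.mulVec_mulVec, Matrix.mul_nonsing_inv _ hdet] using this
      have hvm := Matrix.vecMul_transpose A⁻¹ x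
      rw [hAiT] at hvm
      have key : dotProduct (star x) (M *ᵥ x)
          = dotProduct (A⁻¹ *ᵥ x) (A⁻¹ *ᵥ x) := by
        rw [star_trivial, hMdef, ← Matrix.mulVec_mulVec, Matrix.dotProduct_mulVec, hvm]
      rw [key]
      rcases lt_or_eq_of_le (Finset.sum_nonneg
        (fun i _ => mul_self_nonneg ((A⁻¹ *ᵥ x) i)) :
        (0:ℝ) ≤ dotProduct (A⁻¹ *ᵥ x) (A⁻¹ *ᵥ x)) with h | h
      · exact h
      · exact absurd (dotProduct_self_eq_zero.mp h.symm) hx'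
  clear_value M
  -- the Lyapunov linear map
  let L : Matrix (Fin n) (Fin n) ℝ →ₗ[ℝ] Matrix (Fin n) (Fin n) ℝ :=
    { toFun := fun B => B * M + M * B
      map_add' := by intro X Y; simp [Matrix.add_mul, Matrix.mul_add]; abel
      map_smul' := by intro c X; simp [Matrix.smul_mul, Matrix.mul_smul] }
  have hLinj : Function.Injective L := by
    rw [← LinearMap.ker_eq_bot]
    rw [LinearMap.ker_eq_bot']
    intro B hB
    exact lyap_inj hMpd hB
  have hLsurj : Function.Surjective L := LinearMap.injective_iff_surjective.mp hLinj
  set C : Matrix (Fin n) (Fin n) ℝ := F * A⁻¹ + A⁻¹ * Fᵀ with hCdef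
  have hCsymm : Cᵀ = C := by
    rw [hCdef, Matrix.transpose_add, Matrix.transpose_mul, Matrix.transpose_mul, hAiT,
      Matrix.transpose_transpose, add_comm]
  clear_value C
  obtain ⟨B, hB⟩ := hLsurj C
  have hB' : B * M + M * B = C := hB
  have hBsymm : Bᵀ = B := by
    apply hLinj
    show Bᵀ * M + M * Bᵀ = B * M + M * B
    have : Bᵀ * M + M * Bᵀ = (B * M + M * B)ᵀ := by
      rw [Matrix.transpose_add, Matrix.transpose_mul, Matrix.transpose_mul, hMT, add_comm]
    rw [this, hB', hCsymm]
  -- skew condition holds for B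
  have hskewB : (F * A⁻¹ - B * M)ᵀ = -(F * A⁻¹ - B * M) := by
    rw [Matrix.transpose_sub, Matrix.transpose_mul, Matrix.transpose_mul, hAiT, hMT, hBsymm,
      eq_neg_iff_add_eq_zero]
    calc A⁻¹ * Fᵀ - M * B + (F * A⁻¹ - B * M)
        = (F * A⁻¹ + A⁻¹ * Fᵀ) - (B * M + M * B) := by abel
      _ = C - (B * M + M * B) := by rw [hCdef]
      _ = 0 := by rw [hB', sub_self]
  -- any symmetric B' satisfying the skew condition satisfies the Lyapunov equation
  have hlyap : ∀ B' : Matrix (Fin n) (Fin n) ℝ, B'.IsSymm →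
      (F * A⁻¹ - B' * M)ᵀ = -(F * A⁻¹ - B' * M) → B' * M + M * B' = C := by
    intro B' hB's hB'skew
    rw [Matrix.transpose_sub, Matrix.transpose_mul, Matrix.transpose_mul, hAiT, hMT,
      hB's.eq, eq_neg_iff_add_eq_zero] at hB'skew
    have hthis : (F * A⁻¹ + A⁻¹ * Fᵀ) - (B' * M + M * B') = 0 :=
      calc (F * A⁻¹ + A⁻¹ * Fᵀ) - (B' * M + M * B')
          = A⁻¹ * Fᵀ - M * B' + (F * A⁻¹ - B' * M) := by abel
        _ = 0 := hB'skew
    have h4 := sub_eq_zero.mp hthis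
    rw [← h4, hCdef]
  refine ⟨⟨B, ⟨hBsymm, hskewB⟩, ?_⟩, ?_⟩
  · rintro B' ⟨hB's, hB'skew⟩
    apply hLinj
    show B' * M + M * B' = B * M + M * B
    rw [hlyap B' hB's hB'skew, hB']
  · intro B₀ hB₀s hB₀skew S hSs
    set K : Matrix (Fin n) (Fin n) ℝ := F * A⁻¹ - B₀ * M with hKdef
    have hKskew : Kᵀ = -K := hB₀skew
    have htr : frob (F - B₀ * A⁻¹) (S * A⁻¹) = Matrix.trace (S * (-K)) := by
      rw [frob, Matrix.trace_mul_comm, Matrix.mul_assoc]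
      congr 1
      congr 1
      rw [← hKskew, hKdef, Matrix.transpose_sub, Matrix.transpose_sub, Matrix.transpose_mul,
        Matrix.transpose_mul, Matrix.transpose_mul, hAiT, hMT, hB₀s.eq, Matrix.mul_sub,
        hMdef, Matrix.mul_assoc]
    have hSK : Matrix.trace (S * K) = 0 := by
      have h1 : Matrix.trace (S * K) = Matrix.trace (Kᵀ * Sᵀ) := by
        rw [← Matrix.trace_transpose (S * K), Matrix.transpose_mul]
      rw [hKskew, hSs.eq, Matrix.neg_mul, Matrix.trace_neg,
        Matrix.trace_mul_comm K S] at h1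
      linarith
    rw [htr, Matrix.mul_neg, Matrix.trace_neg, hSK, neg_zero]
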